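/- Let λ₁, λ₂, μ₁, μ₂, θ_s, θ_d > 0, γ_s = λ₁/(λ₁+λ₂), and define π^L_{m,n} = P^L_{m+n}·S^L_m with P^L_n = ∏_{i=1}^{n} (λ₁+λ₂)/(μ₁+μ₂+i·θ_s) and S^L_m = ∏_{i=1}^{m} ((μ₁+μ₂·[i>1]+(i-1)θ_s)(1-γ_s))/(μ₂+i·θ_s), and q_{m,1} = (∏_{k=1}^{m} λ₂/(μ₂+k·θ_s))·(μ₁/(λ₁+θ_d)). Then for all m ≥ 1, q_{m,1}·(λ₁+θ_d) = π^L_{m,0}·μ₁ + ∑_{k=1}^{m} π^L_{m-k,k}·μ₁·(1-γ_s)^k. -/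

import Mathlib

open Finset

-- T j := ∏ i ∈ Icc 1 j, (m1 + ite + (i-1)θs)/(m2+iθs)
lemma Tform (m1 m2 θs : ℝ) (hm2 : 0 < m2) (hθs : 0 < θs) (j : ℕ) :
    ∏ i ∈ Icc 1 (j+1), (m1 + (if 1 < i then m2 else 0) + ((i:ℝ)-1)*θs)/(m2+(i:ℝ)*θs)
    = m1 * (∏ i ∈ Icc 1 j, (m1+m2+(i:ℝ)*θs)) / ∏ i ∈ Icc 1 (j+1), (m2+(i:ℝ)*θs) := by
  have hB : ∀ n : ℕ, (∏ i ∈ Icc 1 n, (m2+(i:ℝ)*θs)) ≠ 0 := by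
    intro n
    refine prod_ne_zero_iff.2 (fun i hi => ?_)
    have : (0:ℝ) < (i:ℝ) := by
      exact_mod_cast Nat.lt_of_lt_of_le Nat.zero_lt_one (mem_Icc.1 hi).1
    positivity
  induction j with
  | zero => norm_num
  | succ n ih =>
    rw [prod_Icc_succ_top (by omega : 1 ≤ n+2), ih,
      prod_Icc_succ_top (by omega : 1 ≤ n+1),
      prod_Icc_succ_top (by omega : 1 ≤ n+2)]
    have h2 : (1:ℕ) < n+2 := by omega
    rw [if_pos h2]
    have hc : m2 + ((n:ℝ)+2)*θs ≠ 0 := by positivity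
    have := hB (n+1)
    field_simp
    rw [prod_Icc_succ_top (by omega : 1 ≤ n+1), prod_Icc_succ_top (by omega : 1 ≤ n+1)]
    push_cast
    simp only [show ∀ (a : ℝ) (n : ℕ), ∏ x ∈ Icc 1 n, (a + θs * (x:ℝ)) = ∏ x ∈ Icc 1 n, (a + (x:ℝ) * θs) from fun a n => prod_congr rfl (fun x _ => by ring)]
    ring

lemma auxsum (m1 m2 θs : ℝ) (hm1 : 0 < m1) (hm2 : 0 < m2) (hθs : 0 < θs) (m : ℕ) :
    ∑ j ∈ range (m+1),
      ∏ i ∈ Icc 1 j, (m1 + (if 1 < i then m2 else 0) + ((i:ℝ)-1)*θs)/(m2+(i:ℝ)*θs)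
    = (∏ i ∈ Icc 1 m, (m1+m2+(i:ℝ)*θs)) / ∏ i ∈ Icc 1 m, (m2+(i:ℝ)*θs) := by
  have hB : ∀ n : ℕ, (∏ i ∈ Icc 1 n, (m2+(i:ℝ)*θs)) ≠ 0 := by
    intro n
    refine prod_ne_zero_iff.2 (fun i hi => ?_)
    have : (0:ℝ) < (i:ℝ) := by
      exact_mod_cast Nat.lt_of_lt_of_le Nat.zero_lt_one (mem_Icc.1 hi).1
    positivity
  induction m with
  | zero => norm_num
  | succ n ih =>
    rw [sum_range_succ, ih, Tform m1 m2 θs hm2 hθs n,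
      prod_Icc_succ_top (by omega : 1 ≤ n+1), prod_Icc_succ_top (by omega : 1 ≤ n+1)]
    have hc : m2 + ((n:ℝ)+1)*θs ≠ 0 := by positivity
    have := hB n
    field_simp
    simp only [show ∀ (a : ℝ) (n : ℕ), ∏ x ∈ Icc 1 n, (a + θs * (x:ℝ)) = ∏ x ∈ Icc 1 n, (a + (x:ℝ) * θs) from fun a n => prod_congr rfl (fun x _ => by ring)]
    ring

theorem stmt_15 (l1 l2 m1 m2 θs θd : ℝ) (hl1 : 0 < l1) (hl2 : 0 < l2) (hm1 : 0 < m1)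
    (hm2 : 0 < m2) (hθs : 0 < θs) (hθd : 0 < θd)
    (γs : ℝ) (hγs : γs = l1 / (l1 + l2))
    (P S : ℕ → ℝ)
    (hP : ∀ n : ℕ, P n = ∏ i ∈ Finset.Icc 1 n, (l1 + l2) / (m1 + m2 + (i : ℝ) * θs))
    (hS : ∀ m : ℕ, S m = ∏ i ∈ Finset.Icc 1 m,
      ((m1 + (if 1 < i then m2 else 0) + ((i : ℝ) - 1) * θs) * (1 - γs)) /
        (m2 + (i : ℝ) * θs))
    (πL : ℕ → ℕ → ℝ) (hπL : ∀ m n : ℕ, πL m n = P (m + n) * S m)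
    (q : ℕ → ℝ)
    (hq : ∀ m : ℕ, q m =
      (∏ k ∈ Finset.Icc 1 m, l2 / (m2 + (k : ℝ) * θs)) * (m1 / (l1 + θd))) :
    ∀ m : ℕ, 1 ≤ m →
      q m * (l1 + θd) =
        πL m 0 * m1 + ∑ k ∈ Finset.Icc 1 m, πL (m - k) k * m1 * (1 - γs) ^ k := by
  intro m hm
  have hA : (0:ℝ) < l1 + l2 := by linarith
  have hA' : l1 + l2 ≠ 0 := ne_of_gt hA
  have hθd' : l1 + θd ≠ 0 := by positivity
  set T : ℕ → ℝ := fun j => ∏ i ∈ Icc 1 j,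
    (m1 + (if 1 < i then m2 else 0) + ((i:ℝ)-1)*θs)/(m2+(i:ℝ)*θs) with hT
  have h1γ : 1 - γs = l2 / (l1 + l2) := by rw [hγs]; field_simp; ring
  have hcard : ∀ j : ℕ, (Icc 1 j).card = j := by intro j; rw [Nat.card_Icc]; omega
  -- S j = T j * (l2/(l1+l2))^j
  have hSj : ∀ j : ℕ, S j = T j * (l2/(l1+l2))^j := by
    intro j
    rw [hS, h1γ, hT]
    rw [show (∏ i ∈ Icc 1 j,
        (m1 + (if 1 < i then m2 else 0) + ((i:ℝ)-1)*θs)/(m2+(i:ℝ)*θs)) * (l2/(l1+l2))^j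
      = ∏ i ∈ Icc 1 j, ((m1 + (if 1 < i then m2 else 0) + ((i:ℝ)-1)*θs)/(m2+(i:ℝ)*θs)
          * (l2/(l1+l2)))
      from by rw [prod_mul_distrib, prod_const, hcard]]
    refine prod_congr rfl (fun i _ => ?_)
    ring
  have hBne : (∏ i ∈ Icc 1 m, (m2+(i:ℝ)*θs)) ≠ 0 := by
    refine prod_ne_zero_iff.2 (fun i hi => ?_)
    have : (0:ℝ) < (i:ℝ) := by
      exact_mod_cast Nat.lt_of_lt_of_le Nat.zero_lt_one (mem_Icc.1 hi).1
    positivity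
  have hCne : (∏ i ∈ Icc 1 m, (m1+m2+(i:ℝ)*θs)) ≠ 0 := by
    refine prod_ne_zero_iff.2 (fun i hi => ?_)
    have : (0:ℝ) < (i:ℝ) := by
      exact_mod_cast Nat.lt_of_lt_of_le Nat.zero_lt_one (mem_Icc.1 hi).1
    positivity
  have hterm : ∀ k ∈ Icc 1 m, πL (m-k) k * m1 * (1-γs)^k
      = (P m * m1 * (l2/(l1+l2))^m) * T (m-k) := by
    intro k hk
    obtain ⟨hk1, hk2⟩ := mem_Icc.1 hk
    rw [hπL, Nat.sub_add_cancel hk2, hSj, h1γ]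
    calc P m * (T (m-k) * (l2/(l1+l2))^(m-k)) * m1 * (l2/(l1+l2))^k
        = (P m * m1 * ((l2/(l1+l2))^(m-k) * (l2/(l1+l2))^k)) * T (m-k) := by ring
      _ = (P m * m1 * (l2/(l1+l2))^m) * T (m-k) := by
          rw [← pow_add, Nat.sub_add_cancel hk2]
  have hre : ∑ k ∈ Icc 1 m, T (m-k) = ∑ j ∈ range m, T j := by
    rw [← Finset.Ico_add_one_right_eq_Icc, sum_Ico_eq_sum_range]
    have h2 : m + 1 - 1 = m := by omega
    rw [h2]
    have h1 : ∀ i ∈ range m, T (m - (1+i)) = T (m-1-i) := by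
      intro i _; congr 1; omega
    rw [sum_congr rfl h1, sum_range_reflect]
  rw [hq, hπL, hSj]
  simp only [Nat.add_zero]
  rw [sum_congr rfl hterm, ← mul_sum, hre]
  have hcomb : P m * (T m * (l2/(l1+l2))^m) * m1 + (P m * m1 * (l2/(l1+l2))^m) * ∑ j ∈ range m, T j
       = (P m * m1 * (l2/(l1+l2))^m) * ∑ j ∈ range (m+1), T j := by
    rw [sum_range_succ]; ring
  rw [hcomb]
  simp only [hT]
  rw [auxsum m1 m2 θs hm1 hm2 hθs m, hP,
    prod_div_distrib, prod_div_distrib, prod_const, prod_const, hcard]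
  field_simp
  ring
  rw [inv_pow, mul_assoc, inv_mul_cancel₀ (pow_ne_zero _ (ne_of_gt (by linarith : (0:ℝ) < l2 + l1))), mul_one]
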